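/- Let Γ = (C, A, Δ) be a normed BPA system, R ⊆ C_G, and Id_R = {X ∈ C : X ≃_R ε}. Then for every process α: α ≃_R ε if and only if α ∈ (Id_R)*, i.e., every constant occurring in α lies in Id_R. -/

import Mathlib

open Relation

/-- A BPA system over constants `C` and actions `A`: a distinguished silent
action `tau`, and a finite set of transition rules `X —ℓ→ α`, where `C` and
`A` are finite. -/
structure BPA (C A : Type) where
  tau : A
  rules : Set (C × A × List C)
  finC : Finite C
  finA : Finite A
  finRules : rules.Finite

namespace BPA

variable {C A : Type}

/-- One-step labelled transition between processes.  Processes are strings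
over `C` (lists, with the leftmost constant acting first). -/
def Step (Γ : BPA C A) (ℓ : A) (p q : List C) : Prop :=
  ∃ X γ β, (X, ℓ, γ) ∈ Γ.rules ∧ p = X :: β ∧ q = γ ++ β

/-- A transition carrying an arbitrary label. -/
def AnyStep (Γ : BPA C A) (p q : List C) : Prop := ∃ ℓ, Γ.Step ℓ p q

/-- `⟹` : the reflexive transitive closure of silent steps. -/
def TauStar (Γ : BPA C A) : List C → List C → Prop := ReflTransGen (Γ.Step Γ.tau)

/-- A process is normed if it can reach the empty process `ε`. -/
def NormedProc (Γ : BPA C A) (p : List C) : Prop := ReflTransGen Γ.AnyStep p []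

/-- The BPA system is normed. -/
def Normed (Γ : BPA C A) : Prop := ∀ X : C, Γ.NormedProc [X]

/-- A chain of `s`-steps starting at `start` in which every visited state is
related by `r` to the process `anchor`. -/
def RelChain (s : List C → List C → Prop) (r : List C → List C → Prop)
    (anchor : List C) : List C → List C → Prop :=
  ReflTransGen fun x y => s x y ∧ r anchor y

/-- Branching bisimulation (an equivalence relation by convention). -/
def IsBranchingBisim (Γ : BPA C A) (r : List C → List C → Prop) : Prop :=
  Equivalence r ∧ ∀ α β, r α β →
    ((∀ a, a ≠ Γ.tau → ∀ α', Γ.Step a α α' →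
        ∃ β'' β', RelChain (Γ.Step Γ.tau) r β β β'' ∧ Γ.Step a β'' β' ∧ r α' β') ∧
     (∀ α', Γ.Step Γ.tau α α' → ¬ r α α' →
        ∃ β'' β', RelChain (Γ.Step Γ.tau) r β β β'' ∧ Γ.Step Γ.tau β'' β' ∧
          ¬ r β'' β' ∧ r α' β'))

/-- Branching bisimilarity `≃` : the largest branching bisimulation. -/
def Bisim (Γ : BPA C A) (α β : List C) : Prop :=
  ∃ r, Γ.IsBranchingBisim r ∧ r α β

/-- A ground process: it can silently reach `ε`. -/
def Ground (Γ : BPA C A) (p : List C) : Prop := Γ.TauStar p []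

/-- The set `C_G` of ground constants. -/
def GroundC (Γ : BPA C A) : Set C := {X | Γ.Ground [X]}

/-- `R`-equality `=_R`: the two processes differ only in suffixes over `R`. -/
def REq (R : Set C) (α β : List C) : Prop :=
  ∃ ζ a b, α = ζ ++ a ∧ β = ζ ++ b ∧ (∀ X ∈ a, X ∈ R) ∧ (∀ X ∈ b, X ∈ R)

open Classical in
/-- The `R`-normal form `α_R` of a process: delete the maximal suffix over `R`. -/
noncomputable def nf (R : Set C) (α : List C) : List C :=
  (α.reverse.dropWhile fun X => decide (X ∈ R)).reverse

/-- A process is in `R`-normal form. -/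
def InNF (R : Set C) (α : List C) : Prop := nf R α = α

/-- The `R`-transition relation `—ℓ→_R` between `R`-normal forms. -/
def StepR (Γ : BPA C A) (R : Set C) (ℓ : A) (ζ η : List C) : Prop :=
  ∃ α β, ζ = nf R α ∧ η = nf R β ∧ Γ.Step ℓ α β

/-- `⟹_R`. -/
def TauStarR (Γ : BPA C A) (R : Set C) : List C → List C → Prop :=
  ReflTransGen (Γ.StepR R Γ.tau)

/-- `R`-bisimulation: an equivalence relation containing `=_R` satisfying
ground preservation and the relativized branching transfer conditions. -/
def IsRBisim (Γ : BPA C A) (R : Set C) (r : List C → List C → Prop) : Prop :=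
  Equivalence r ∧ (∀ α β, REq R α β → r α β) ∧
  ∀ α β, r α β →
    ((Γ.TauStar α [] → Γ.TauStar β []) ∧
     (∀ α', Γ.Step Γ.tau α α' → ¬ r α α' →
        ∃ β'' β', RelChain (Γ.StepR R Γ.tau) r β (nf R β) β'' ∧
          Γ.StepR R Γ.tau β'' β' ∧ ¬ r β'' β' ∧ r α' β') ∧
     (∀ a, a ≠ Γ.tau → ∀ α', Γ.Step a α α' →
        ∃ β'' β', RelChain (Γ.StepR R Γ.tau) r β (nf R β) β'' ∧
          Γ.StepR R a β'' β' ∧ r α' β'))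

/-- `R`-bisimilarity `≃_R` : the largest `R`-bisimulation. -/
def RBisim (Γ : BPA C A) (R : Set C) (α β : List C) : Prop :=
  ∃ r, Γ.IsRBisim R r ∧ r α β

/-- `Id_R = {X ∈ C : X ≃_R ε}`. -/
def IdR (Γ : BPA C A) (R : Set C) : Set C := {X | Γ.RBisim R [X] []}

/-- `Rd_R(γ) = {X ∈ C : Xγ ≃_R γ}`. -/
def RdR (Γ : BPA C A) (R : Set C) (γ : List C) : Set C :=
  {X | Γ.RBisim R (X :: γ) γ}

/-- An admissible reference set: `R = Id_R`. -/
def Admissible (Γ : BPA C A) (R : Set C) : Prop := R = Γ.IdR R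

end BPA
namespace BPA

variable {C A : Type}

section ListAux
variable {α : Type*} (p : α → Bool)

theorem rdropWhile_append_of_all {m : List α} (l : List α) (h : ∀ x ∈ m, p x) :
    List.rdropWhile p (l ++ m) = List.rdropWhile p l := by
  induction m using List.reverseRecOn with
  | nil => simp
  | append_singleton m a ih =>
      rw [← List.append_assoc, List.rdropWhile_concat_pos _ _ a (h a (by simp))]
      exact ih fun x hx => h x (by simp [hx])

theorem rdropWhile_append_of_ne_nil {m : List α} (l : List α) (h : List.rdropWhile p m ≠ []) :
    List.rdropWhile p (l ++ m) = l ++ List.rdropWhile p m := by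
  induction m using List.reverseRecOn with
  | nil => simp at h
  | append_singleton m a ih =>
      by_cases hp : p a
      · rw [← List.append_assoc, List.rdropWhile_concat_pos _ _ a hp, ih]
        · rw [List.rdropWhile_concat_pos _ _ a hp]
        · intro hnil
          rw [List.rdropWhile_concat_pos _ _ a hp] at h
          exact h hnil
      · rw [← List.append_assoc, List.rdropWhile_concat_neg _ _ a hp,
          List.rdropWhile_concat_neg _ _ a hp, List.append_assoc]

theorem rdropWhile_append_rtakeWhile (l : List α) :
    List.rdropWhile p l ++ List.rtakeWhile p l = l := by
  rw [List.rdropWhile, List.rtakeWhile, ← List.reverse_append,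
    List.takeWhile_append_dropWhile, List.reverse_reverse]

end ListAux

section NF
open Classical

variable {R : Set C}

/-- all constants in `R` -/
def Rstar (R : Set C) (l : List C) : Prop := ∀ X ∈ l, X ∈ R

theorem nf_def (x : List C) :
    nf R x = List.rdropWhile (fun X => decide (X ∈ R)) x := rfl

@[simp] theorem nf_nil : nf R ([] : List C) = [] := by
  simp [nf_def, List.rdropWhile]

theorem nf_append_rstar {ρ : List C} (x : List C) (h : Rstar R ρ) :
    nf R (x ++ ρ) = nf R x := by
  rw [nf_def, nf_def]
  exact rdropWhile_append_of_all _ _ fun y hy => decide_eq_true (h y hy)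

theorem nf_idem (x : List C) : nf R (nf R x) = nf R x := by
  rw [nf_def, nf_def, List.rdropWhile_idempotent]

theorem nf_decomp (x : List C) : ∃ ρ, Rstar R ρ ∧ x = nf R x ++ ρ := by
  refine ⟨List.rtakeWhile (fun X => decide (X ∈ R)) x, ?_, ?_⟩
  · intro y hy
    have := List.mem_rtakeWhile_imp hy
    simpa using this
  · rw [nf_def, rdropWhile_append_rtakeWhile]

theorem nf_eq_nil_iff {x : List C} : nf R x = [] ↔ Rstar R x := by
  rw [nf_def]
  rw [List.rdropWhile_eq_nil_iff]
  constructor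
  · intro h y hy; simpa using h y hy
  · intro h y hy; simpa using h y hy

theorem nf_append_of_ne_nil {w : List C} (x : List C) (h : nf R w ≠ []) :
    nf R (x ++ w) = x ++ nf R w := by
  rw [nf_def, nf_def] at *
  exact rdropWhile_append_of_ne_nil _ _ h

theorem REq_iff_nf_eq {a b : List C} : REq R a b ↔ nf R a = nf R b := by
  constructor
  · rintro ⟨ζ, u, v, rfl, rfl, hu, hv⟩
    rw [nf_append_rstar _ hu, nf_append_rstar _ hv]
  · intro h
    obtain ⟨ρ, hρ, hx⟩ := nf_decomp (R := R) a
    obtain ⟨σ, hσ, hy⟩ := nf_decomp (R := R) b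
    exact ⟨nf R a, ρ, σ, hx, by rw [h]; exact hy, hρ, hσ⟩

theorem REq_nf_self (a : List C) : REq R a (nf R a) :=
  REq_iff_nf_eq.2 (nf_idem a).symm

/-- a list ending in a fixed nonempty normal form is a normal form -/
theorem nf_append_nf {w : List C} (x : List C) (hw : nf R w = w) (hne : w ≠ []) :
    nf R (x ++ w) = x ++ w := by
  rw [nf_append_of_ne_nil x (by rw [hw]; exact hne), hw]

end NF

section StepAux

variable {Γ : BPA C A} {R : Set C}

theorem step_append {ℓ : A} {a b : List C} (c : List C) (h : Γ.Step ℓ a b) :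
    Γ.Step ℓ (a ++ c) (b ++ c) := by
  obtain ⟨X, γ, β, hr, rfl, rfl⟩ := h
  exact ⟨X, γ, β ++ c, hr, rfl, by simp⟩

theorem tauStar_append {a b : List C} (c : List C) (h : Γ.TauStar a b) :
    Γ.TauStar (a ++ c) (b ++ c) := by
  induction h with
  | refl => exact ReflTransGen.refl
  | tail _ h2 ih => exact ih.tail (step_append c h2)

theorem ground_append {a b : List C} (ha : Γ.TauStar a []) (hb : Γ.TauStar b []) :
    Γ.TauStar (a ++ b) [] := by
  have := tauStar_append (Γ := Γ) b ha
  simpa [TauStar] using this.trans hb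

theorem ground_of_append_right {a b : List C} (h : Γ.TauStar (a ++ b) []) :
    Γ.TauStar b [] := by
  generalize hz : a ++ b = z at h
  induction h using ReflTransGen.head_induction_on generalizing a with
  | refl =>
      rcases List.append_eq_nil_iff.1 hz with ⟨rfl, rfl⟩
      exact ReflTransGen.refl
  | head hstep htail ih =>
      subst hz
      rcases a with _ | ⟨X, a'⟩
      · simp only [List.nil_append] at hstep ⊢
        exact ReflTransGen.head hstep htail
      · obtain ⟨Y, γ, β, hr, he, rfl⟩ := hstep
        have hXY : X = Y := (List.cons.injEq .. ▸ he).1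
        have hb : a' ++ b = β := (List.cons.injEq .. ▸ he).2
        exact ih (a := γ ++ a') (by simp [← hb])

theorem ground_of_append_left {a b : List C} (h : Γ.TauStar (a ++ b) []) :
    Γ.TauStar a [] := by
  generalize hz : a ++ b = z at h
  induction h using ReflTransGen.head_induction_on generalizing a with
  | refl =>
      rcases List.append_eq_nil_iff.1 hz with ⟨rfl, rfl⟩
      exact ReflTransGen.refl
  | head hstep htail ih =>
      subst hz
      rcases a with _ | ⟨X, a'⟩
      · exact ReflTransGen.refl
      · obtain ⟨Y, γ, β, hr, he, rfl⟩ := hstep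
        have hXY : X = Y := (List.cons.injEq .. ▸ he).1
        have hb : a' ++ b = β := (List.cons.injEq .. ▸ he).2
        subst hXY
        have := ih (a := γ ++ a') (by simp [← hb])
        exact ReflTransGen.head ⟨X, γ, a', hr, rfl, rfl⟩ this

end StepAux

section Ground
variable {Γ : BPA C A} {R : Set C}

theorem rstar_ground (hR : R ⊆ Γ.GroundC) {ρ : List C} (h : Rstar R ρ) :
    Γ.TauStar ρ [] := by
  induction ρ with
  | nil => exact ReflTransGen.refl
  | cons X t ih =>
      have hX : Γ.TauStar [X] [] := hR (h X (by simp))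
      have ht : Γ.TauStar t [] := ih fun y hy => h y (by simp [hy])
      exact ground_append hX ht

theorem ground_nf_iff (hR : R ⊆ Γ.GroundC) (x : List C) :
    Γ.TauStar x [] ↔ Γ.TauStar (nf R x) [] := by
  obtain ⟨ρ, hρ, hx⟩ := nf_decomp (R := R) x
  constructor
  · intro h; exact ground_of_append_left (hx ▸ h)
  · intro h; rw [hx]; exact ground_append h (rstar_ground hR hρ)

theorem stepR_of_step {ℓ : A} {a b : List C} (h : Γ.Step ℓ a b) :
    Γ.StepR R ℓ (nf R a) (nf R b) := ⟨a, b, rfl, rfl, h⟩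

theorem stepR_nf_left {ℓ : A} {u v : List C} (h : Γ.StepR R ℓ u v) : nf R u = u := by
  obtain ⟨a, b, rfl, rfl, _⟩ := h; exact nf_idem a

theorem stepR_nf_right {ℓ : A} {u v : List C} (h : Γ.StepR R ℓ u v) : nf R v = v := by
  obtain ⟨a, b, rfl, rfl, _⟩ := h; exact nf_idem b

theorem isRBisim_nfEq (hR : R ⊆ Γ.GroundC) :
    Γ.IsRBisim R (fun a b => nf R a = nf R b) := by
  refine ⟨⟨fun a => rfl, fun h => h.symm, fun h1 h2 => h1.trans h2⟩,
    fun a b h => REq_iff_nf_eq.1 h, ?_⟩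
  intro a b h
  refine ⟨?_, ?_, ?_⟩
  · intro hg
    rw [ground_nf_iff hR, ← h, ← ground_nf_iff hR]; exact hg
  · intro a' hst hne
    refine ⟨nf R b, nf R a', ReflTransGen.refl, ⟨a, a', h.symm, rfl, hst⟩, ?_, ?_⟩
    · show ¬ nf R (nf R b) = nf R (nf R a')
      rw [nf_idem, nf_idem, ← h]; exact hne
    · exact (nf_idem a').symm
  · intro ℓ hℓ a' hst
    exact ⟨nf R b, nf R a', ReflTransGen.refl, ⟨a, a', h.symm, rfl, hst⟩, (nf_idem a').symm⟩

theorem rbisim_of_REq (hR : R ⊆ Γ.GroundC) {a b : List C} (h : REq R a b) :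
    Γ.RBisim R a b := ⟨_, isRBisim_nfEq hR, REq_iff_nf_eq.1 h⟩

theorem rbisim_refl (hR : R ⊆ Γ.GroundC) (a : List C) : Γ.RBisim R a a :=
  ⟨_, isRBisim_nfEq hR, rfl⟩

theorem rbisim_nf (hR : R ⊆ Γ.GroundC) (a : List C) : Γ.RBisim R a (nf R a) :=
  rbisim_of_REq hR (REq_nf_self a)

theorem RBisim.symm {a b : List C} (h : Γ.RBisim R a b) : Γ.RBisim R b a := by
  obtain ⟨r, hr, hab⟩ := h; exact ⟨r, hr, hr.1.symm hab⟩

theorem RBisim.ground {a b : List C} (h : Γ.RBisim R a b) (hg : Γ.TauStar a []) :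
    Γ.TauStar b [] := by
  obtain ⟨r, hr, hab⟩ := h; exact (hr.2.2 a b hab).1 hg

end Ground

section ChainData
variable (Γ : BPA C A) (R : Set C)

/-- chains of silent `R`-steps whose targets satisfy `P` -/
def Chain (P : List C → Prop) : List C → List C → Prop :=
  ReflTransGen fun x y => Γ.StepR R Γ.tau x y ∧ P y

/-- matching data: a `P`-chain followed by an `ℓ`-step to a `Q`-state -/
def Data (P Q : List C → Prop) (ℓ : A) (s : List C) : Prop :=
  ∃ w v, Γ.Chain R P s w ∧ Γ.StepR R ℓ w v ∧ Q v

variable {Γ R}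

theorem Chain.mono {P Q : List C → Prop} (h : ∀ y, P y → Q y) {a b : List C}
    (hc : Γ.Chain R P a b) : Γ.Chain R Q a b := by
  induction hc with
  | refl => exact ReflTransGen.refl
  | tail _ hxy ih => exact ReflTransGen.tail ih ⟨hxy.1, h _ hxy.2⟩

theorem Data.mono {P P' Q Q' : List C → Prop} (hP : ∀ y, P y → P' y) (hQ : ∀ y, Q y → Q' y)
    {ℓ : A} {s : List C} (hd : Γ.Data R P Q ℓ s) : Γ.Data R P' Q' ℓ s := by
  obtain ⟨w, v, hc, hs, hq⟩ := hd
  exact ⟨w, v, hc.mono hP, hs, hQ v hq⟩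

theorem relChain_eq_chain (r : List C → List C → Prop) (β : List C) :
    RelChain (Γ.StepR R Γ.tau) r β = Γ.Chain R (r β) := rfl

theorem Chain.append {P : List C → Prop} {a b c : List C}
    (h1 : Γ.Chain R P a b) (h2 : Γ.Chain R P b c) : Γ.Chain R P a c :=
  ReflTransGen.trans h1 h2

end ChainData
section Transfer
variable {Γ : BPA C A} {R : Set C}

/-- Transfer of matching data across a single link of an `R`-bisimulation. -/
theorem transferR {r p : List C → List C → Prop}
    (hr : Γ.IsRBisim R r) (hp : Equivalence p)
    (hrp : ∀ a b, r a b → p a b)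
    {B γ δ : List C} (hBδ : p B δ) (hγδ : r γ δ)
    {ℓ : A} {α' : List C}
    (hesc : ℓ = Γ.tau → ∀ w, p B w → p α' w → False)
    (hd : Γ.Data R (fun y => p B y) (fun v => p α' v) ℓ (nf R γ)) :
    Γ.Data R (fun y => p B y) (fun v => p α' v) ℓ (nf R δ) := by
  classical
  have rnf : ∀ x : List C, r x (nf R x) := fun x => hr.2.1 _ _ (REq_nf_self x)
  have rnf' : ∀ (x s : List C), s = nf R x → r x s := fun x s h => by rw [h]; exact rnf x
  obtain ⟨wend, v, hc, hfin, hQv⟩ := hd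
  have final : ∀ s w, r s w → nf R w = w → p B w → Γ.StepR R ℓ s v →
      Γ.Data R (fun y => p B y) (fun u => p α' u) ℓ w := by
    intro s w hsw hwnf hBw hstep
    obtain ⟨a0, b0, ha0, hb0, hst⟩ := hstep
    have hra0 : r a0 w := hr.1.trans (rnf' a0 _ ha0) hsw
    have hvb0 : p v b0 := hrp _ _ (hr.1.symm (rnf' b0 _ hb0))
    by_cases hτ : ℓ = Γ.tau
    · subst hτ
      by_cases hinert : r a0 b0
      · exfalso
        have h2 : p α' w :=
          hp.trans (hp.trans (hp.trans hQv hvb0) (hrp _ _ (hr.1.symm hinert))) (hrp _ _ hra0)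
        exact hesc rfl w hBw h2
      · obtain ⟨w2, w3, hch2, hst2, _, hrel2⟩ := (hr.2.2 a0 w hra0).2.1 b0 hst hinert
        rw [relChain_eq_chain, hwnf] at hch2
        refine ⟨w2, w3, hch2.mono fun y hy => hp.trans hBw (hrp _ _ hy), hst2, ?_⟩
        exact hp.trans (hp.trans hQv hvb0) (hrp _ _ hrel2)
    · obtain ⟨w2, w3, hch2, hst2, hrel2⟩ := (hr.2.2 a0 w hra0).2.2 ℓ hτ b0 hst
      rw [relChain_eq_chain, hwnf] at hch2
      refine ⟨w2, w3, hch2.mono fun y hy => hp.trans hBw (hrp _ _ hy), hst2, ?_⟩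
      exact hp.trans (hp.trans hQv hvb0) (hrp _ _ hrel2)
  have main : ∀ s, Γ.Chain R (fun y => p B y) s wend →
      ∀ w, r s w → nf R w = w → p B w →
      Γ.Data R (fun y => p B y) (fun u => p α' u) ℓ w := by
    intro s hc
    induction hc using ReflTransGen.head_induction_on with
    | refl =>
        intro w hsw hwnf hBw
        exact final _ _ hsw hwnf hBw hfin
    | head hstep htail ih =>
        intro w hsw hwnf hBw
        obtain ⟨⟨a0, b0, ha0, hb0, hst⟩, hBs1⟩ := hstep
        have hra0 : r a0 w := hr.1.trans (rnf' a0 _ ha0) hsw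
        by_cases hinert : r a0 b0
        · have hs1w : r _ w :=
            hr.1.trans (hr.1.trans (hr.1.symm (rnf' b0 _ hb0)) (hr.1.symm hinert)) hra0
          exact ih w hs1w hwnf hBw
        · obtain ⟨w2, w3, hch2, hst2, _, hrel2⟩ := (hr.2.2 a0 w hra0).2.1 b0 hst hinert
          rw [relChain_eq_chain, hwnf] at hch2
          have hs1w3 : r _ w3 := hr.1.trans (hr.1.symm (rnf' b0 _ hb0)) hrel2
          have hBw3 : p B w3 :=
            hp.trans hBs1 (hrp _ _ (hr.1.trans (hr.1.symm (rnf' b0 _ hb0)) hrel2))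
          have hw3nf : nf R w3 = w3 := stepR_nf_right hst2
          obtain ⟨w4, v4, hc4, hf4, hq4⟩ := ih w3 hs1w3 hw3nf hBw3
          refine ⟨w4, v4, ?_, hf4, hq4⟩
          exact (hch2.mono fun y hy => hp.trans hBw (hrp _ _ hy)).append
            ((ReflTransGen.single ⟨hst2, hBw3⟩).trans hc4)
  have hBnfδ : p B (nf R δ) := hp.trans hBδ (hrp _ _ (rnf δ))
  have h0 : r (nf R γ) (nf R δ) :=
    hr.1.trans (hr.1.trans (hr.1.symm (rnf γ)) hγδ) (rnf δ)
  exact main (nf R γ) hc (nf R δ) h0 (nf_idem δ) hBnfδ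

end Transfer
section StageC
variable {Γ : BPA C A} {R : Set C}

theorem Chain.last {P : List C → Prop} {a b : List C} (h : Γ.Chain R P a b) (ha : P a) :
    P b := by
  induction h with
  | refl => exact ha
  | tail _ h2 _ => exact h2.2

theorem isRBisim_RTG (hR : R ⊆ Γ.GroundC) :
    Γ.IsRBisim R (ReflTransGen (Γ.RBisim R)) := by
  classical
  set p := ReflTransGen (Γ.RBisim R) with hpdef
  have hsymm : ∀ {a b : List C}, p a b → p b a := by
    intro a b h
    induction h with
    | refl => exact ReflTransGen.refl
    | tail _ h2 ih => exact (ReflTransGen.single h2.symm).trans ih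
  have hpEquiv : Equivalence p :=
    ⟨fun _ => ReflTransGen.refl, hsymm, fun h1 h2 => h1.trans h2⟩
  have hsingle : ∀ {a b : List C}, Γ.RBisim R a b → p a b := fun h => ReflTransGen.single h
  refine ⟨hpEquiv, fun a b h => hsingle (rbisim_of_REq hR h), ?_⟩
  intro α B hαB
  have hground : Γ.TauStar α [] → Γ.TauStar B [] := by
    intro hg
    induction hαB with
    | refl => exact hg
    | tail _ h2 ih => exact h2.ground ih
  refine ⟨hground, ?_, ?_⟩
  · -- tau case
    intro α' hst hne
    have hesc : Γ.tau = Γ.tau → ∀ w, p B w → p α' w → False := by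
      intro _ w h1 h2
      exact hne ((hαB.trans h1).trans (hsymm h2))
    have base : Γ.Data R (fun y => p B y) (fun u => p α' u) Γ.tau (nf R α) :=
      ⟨nf R α, nf R α', ReflTransGen.refl, stepR_of_step hst,
        hsingle (rbisim_of_REq hR (REq_nf_self α'))⟩
    have walk : ∀ a, ReflTransGen (Γ.RBisim R) a B →
        Γ.Data R (fun y => p B y) (fun u => p α' u) Γ.tau (nf R a) →
        Γ.Data R (fun y => p B y) (fun u => p α' u) Γ.tau (nf R B) := by
      intro a hab
      induction hab using ReflTransGen.head_induction_on with
      | refl => exact id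
      | head hlink htail ih =>
          intro hd
          obtain ⟨r, hrr, hxy⟩ := hlink
          exact ih (transferR hrr hpEquiv (fun x y hh => hsingle ⟨r, hrr, hh⟩)
            (hsymm htail) hxy hesc hd)
    obtain ⟨w2, v, hch, hstep, hQ⟩ := walk α hαB base
    have hBw2 : p B w2 := hch.last (hsingle (rbisim_of_REq hR (REq_nf_self B)))
    refine ⟨w2, v, hch, hstep, ?_, hQ⟩
    intro hwv
    exact hesc rfl w2 hBw2 (hpEquiv.trans hQ (hsymm hwv))
  · -- visible case
    intro ℓ hℓ α' hst
    have hesc : ℓ = Γ.tau → ∀ w, p B w → p α' w → False := fun hτ => absurd hτ hℓ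
    have base : Γ.Data R (fun y => p B y) (fun u => p α' u) ℓ (nf R α) :=
      ⟨nf R α, nf R α', ReflTransGen.refl, stepR_of_step hst,
        hsingle (rbisim_of_REq hR (REq_nf_self α'))⟩
    have walk : ∀ a, ReflTransGen (Γ.RBisim R) a B →
        Γ.Data R (fun y => p B y) (fun u => p α' u) ℓ (nf R a) →
        Γ.Data R (fun y => p B y) (fun u => p α' u) ℓ (nf R B) := by
      intro a hab
      induction hab using ReflTransGen.head_induction_on with
      | refl => exact id
      | head hlink htail ih =>
          intro hd
          obtain ⟨r, hrr, hxy⟩ := hlink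
          exact ih (transferR hrr hpEquiv (fun x y hh => hsingle ⟨r, hrr, hh⟩)
            (hsymm htail) hxy hesc hd)
    obtain ⟨w2, v, hch, hstep, hQ⟩ := walk α hαB base
    exact ⟨w2, v, hch, hstep, hQ⟩

theorem rbisim_eq_RTG (hR : R ⊆ Γ.GroundC) :
    Γ.RBisim R = ReflTransGen (Γ.RBisim R) := by
  funext a b
  apply propext
  exact ⟨fun h => ReflTransGen.single h, fun h => ⟨_, isRBisim_RTG hR, h⟩⟩

theorem isRBisim_rbisim (hR : R ⊆ Γ.GroundC) : Γ.IsRBisim R (Γ.RBisim R) := by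
  rw [rbisim_eq_RTG hR]
  exact isRBisim_RTG hR

theorem RBisim.trans (hR : R ⊆ Γ.GroundC) {a b c : List C}
    (h1 : Γ.RBisim R a b) (h2 : Γ.RBisim R b c) : Γ.RBisim R a c :=
  (isRBisim_rbisim hR).1.trans h1 h2

end StageC
section Stutter
variable {Γ : BPA C A} {R : Set C}

/-- simulate a real silent path across `≃_R` on the level of `R`-normal forms -/
theorem simpath (hR : R ⊆ Γ.GroundC) {t t' : List C} (hpath : Γ.TauStar t t') :
    ∀ e, nf R e = e → Γ.RBisim R e t →
    ∃ e', Γ.Chain R (fun y => ∃ u, Γ.TauStar t u ∧ Γ.TauStar u t' ∧ Γ.RBisim R y u) e e' ∧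
      Γ.RBisim R e' t' ∧ nf R e' = e' := by
  induction hpath using ReflTransGen.head_induction_on with
  | refl =>
      intro e he hre
      exact ⟨e, ReflTransGen.refl, hre, he⟩
  | head hstep htail ih =>
      rename_i a c
      intro e he hre
      by_cases hin : Γ.RBisim R a c
      · obtain ⟨e', hch, h1, h2⟩ := ih e he (RBisim.trans hR hre hin)
        refine ⟨e', hch.mono ?_, h1, h2⟩
        rintro y ⟨u, hu1, hu2, hu3⟩
        exact ⟨u, ReflTransGen.head hstep hu1, hu2, hu3⟩
      · obtain ⟨w2, w3, hch, hst2, _, hrel⟩ :=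
          ((isRBisim_rbisim hR).2.2 a e hre.symm).2.1 c hstep hin
        rw [relChain_eq_chain, he] at hch
        obtain ⟨e', hch', h1, h2⟩ := ih w3 (stepR_nf_right hst2) hrel.symm
        refine ⟨e', ?_, h1, h2⟩
        have hKw3 : ∃ u, Γ.TauStar a u ∧ Γ.TauStar u t' ∧ Γ.RBisim R w3 u :=
          ⟨c, ReflTransGen.single hstep, htail, hrel.symm⟩
        refine Chain.append (Chain.append (hch.mono ?_) (ReflTransGen.single ⟨hst2, hKw3⟩)) (hch'.mono ?_)
        · intro y hy
          exact ⟨a, ReflTransGen.refl, ReflTransGen.head hstep htail,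
            (RBisim.trans hR hy.symm hre)⟩
        · rintro y ⟨u, hu1, hu2, hu3⟩
          exact ⟨u, ReflTransGen.head hstep hu1, hu2, hu3⟩

/-- relativized stuttering lemma: silent paths to `ε` starting `≃_R ε` stay `≃_R ε`. -/
theorem stuttering (hR : R ⊆ Γ.GroundC) {σ s : List C} (hσ : Γ.RBisim R σ [])
    (h1 : Γ.TauStar σ s) (h2 : Γ.TauStar s []) : Γ.RBisim R s [] := by
  classical
  let K : List C → Prop := fun x => ∃ t, Γ.TauStar σ t ∧ Γ.TauStar t [] ∧ Γ.RBisim R x t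
  let q : List C → List C → Prop := fun a b => Γ.RBisim R a b ∨ (K a ∧ K b)
  have hKcl : ∀ {x y : List C}, Γ.RBisim R y x → K x → K y := by
    rintro x y hxy ⟨t, p1, p2, p3⟩
    exact ⟨t, p1, p2, RBisim.trans hR hxy p3⟩
  have hKground : ∀ {x : List C}, K x → Γ.TauStar x [] := by
    rintro x ⟨t, _, p2, p3⟩
    exact p3.symm.ground p2
  have hq : Γ.IsRBisim R q := by
    refine ⟨⟨fun a => Or.inl (rbisim_refl hR a), ?_, ?_⟩, ?_, ?_⟩
    · rintro a b (h | ⟨h1, h2⟩)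
      · exact Or.inl h.symm
      · exact Or.inr ⟨h2, h1⟩
    · rintro a b c (h | ⟨ha, hb⟩) (h' | ⟨hb', hc'⟩)
      · exact Or.inl (RBisim.trans hR h h')
      · exact Or.inr ⟨hKcl h hb', hc'⟩
      · exact Or.inr ⟨ha, hKcl h'.symm hb⟩
      · exact Or.inr ⟨ha, hc'⟩
    · intro a b h
      exact Or.inl (rbisim_of_REq hR h)
    intro a b hab
    rcases hab with hab | ⟨hKa, hKb⟩
    · refine ⟨fun hg => hab.ground hg, ?_, ?_⟩
      · intro a' hst hne
        have hne' : ¬ Γ.RBisim R a a' := fun h => hne (Or.inl h)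
        obtain ⟨w2, w3, hch, hst2, hneg, hrel⟩ :=
          ((isRBisim_rbisim hR).2.2 a b hab).2.1 a' hst hne'
        rw [relChain_eq_chain] at hch
        have hbw2 : Γ.RBisim R b w2 := hch.last (rbisim_nf hR b)
        refine ⟨w2, w3, ?_, hst2, ?_, Or.inl hrel⟩
        · exact hch.mono fun y hy => Or.inl hy
        · rintro (h | ⟨hw2, hw3⟩)
          · exact hneg h
          · exact hne (Or.inr ⟨hKcl (RBisim.trans hR hab hbw2) hw2, hKcl hrel hw3⟩)
      · intro ℓ hℓ a' hst
        obtain ⟨w2, w3, hch, hst2, hrel⟩ :=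
          ((isRBisim_rbisim hR).2.2 a b hab).2.2 ℓ hℓ a' hst
        rw [relChain_eq_chain] at hch
        exact ⟨w2, w3, hch.mono fun y hy => Or.inl hy, hst2, Or.inl hrel⟩
    · -- both in the merged class K
      obtain ⟨t1, hp1, hp2, hrt1⟩ := hKa
      obtain ⟨t2, hq1, hq2, hrt2⟩ := hKb
      have he0 : Γ.RBisim R (nf R b) t2 := RBisim.trans hR (rbisim_nf hR b).symm hrt2
      obtain ⟨e1, hch1, he1, he1nf⟩ := simpath hR hq2 (nf R b) (nf_idem b) he0
      have he1σ : Γ.RBisim R e1 σ := RBisim.trans hR he1 hσ.symm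
      obtain ⟨e2, hch2, he2, he2nf⟩ := simpath hR hp1 e1 he1nf he1σ
      have hae2 : Γ.RBisim R a e2 := RBisim.trans hR hrt1 he2.symm
      have hKe2 : K e2 := ⟨t1, hp1, hp2, he2⟩
      have hch1' : Γ.Chain R (q b) (nf R b) e1 := by
        refine hch1.mono ?_
        rintro y ⟨u, hu1, hu2, hu3⟩
        exact Or.inr ⟨⟨t2, hq1, hq2, hrt2⟩, ⟨u, hq1.trans hu1, hu2, hu3⟩⟩
      have hch2' : Γ.Chain R (q b) e1 e2 := by
        refine hch2.mono ?_
        rintro y ⟨u, hu1, hu2, hu3⟩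
        exact Or.inr ⟨⟨t2, hq1, hq2, hrt2⟩, ⟨u, hu1, hu2.trans hp2, hu3⟩⟩
      refine ⟨fun _ => hKground ⟨t2, hq1, hq2, hrt2⟩, ?_, ?_⟩
      · intro a' hst hne
        have hne' : ¬ Γ.RBisim R a a' := fun h => hne (Or.inl h)
        obtain ⟨w2, w3, hch3, hst2, hneg, hrel⟩ :=
          ((isRBisim_rbisim hR).2.2 a e2 hae2).2.1 a' hst hne'
        rw [relChain_eq_chain, he2nf] at hch3
        have hKw2 : K w2 := hKcl (hch3.last (rbisim_refl hR e2)).symm hKe2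
        refine ⟨w2, w3, ?_, hst2, ?_, Or.inl hrel⟩
        · refine Chain.append (Chain.append hch1' hch2') (hch3.mono ?_)
          intro y hy
          exact Or.inr ⟨⟨t2, hq1, hq2, hrt2⟩, hKcl hy.symm hKe2⟩
        · rintro (h | ⟨hw2, hw3⟩)
          · exact hneg h
          · exact hne (Or.inr ⟨⟨t1, hp1, hp2, hrt1⟩, hKcl hrel hw3⟩)
      · intro ℓ hℓ a' hst
        obtain ⟨w2, w3, hch3, hst2, hrel⟩ :=
          ((isRBisim_rbisim hR).2.2 a e2 hae2).2.2 ℓ hℓ a' hst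
        rw [relChain_eq_chain, he2nf] at hch3
        refine ⟨w2, w3, ?_, hst2, Or.inl hrel⟩
        refine Chain.append (Chain.append hch1' hch2') (hch3.mono ?_)
        intro y hy
        exact Or.inr ⟨⟨t2, hq1, hq2, hrt2⟩, hKcl hy.symm hKe2⟩
  exact ⟨q, hq, Or.inr ⟨⟨s, h1, h2, rbisim_refl hR s⟩,
    ⟨[], h1.trans h2, ReflTransGen.refl, rbisim_refl hR []⟩⟩⟩

end Stutter
section Suffix
variable {Γ : BPA C A} {R : Set C}

theorem step_cons_destruct {ℓ : A} {X : C} {t b : List C} (h : Γ.Step ℓ (X :: t) b) :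
    ∃ g, (X, ℓ, g) ∈ Γ.rules ∧ b = g ++ t := by
  obtain ⟨Y, g, β, hr, he, rfl⟩ := h
  have h1 : X = Y := (List.cons.injEq .. ▸ he).1
  have h2 : t = β := (List.cons.injEq .. ▸ he).2
  subst h1; subst h2
  exact ⟨g, hr, rfl⟩

theorem rbisim_rstar (hR : R ⊆ Γ.GroundC) {ρ : List C} (hρ : Rstar R ρ) :
    Γ.RBisim R ρ [] :=
  rbisim_of_REq hR ⟨[], ρ, [], by simp, by simp, hρ, by simp⟩

theorem rbisim_of_nf_eq (hR : R ⊆ Γ.GroundC) {a b : List C} (h : nf R a = nf R b) :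
    Γ.RBisim R a b := rbisim_of_REq hR (REq_iff_nf_eq.2 h)

theorem nf_shape {x : List C} (hxnf : nf R x ≠ []) (u ρ : List C) (hρ : Rstar R ρ) :
    nf R (u ++ nf R x ++ ρ) = u ++ nf R x := by
  rw [nf_append_rstar _ hρ, nf_append_nf u (nf_idem x) hxnf]

/-- silently consume an `R*` prefix sitting on top of a fixed nonempty normal form -/
theorem consumeRStar (hR : R ⊆ Γ.GroundC) {P : List C → Prop} {w : List C}
    (hw : nf R w = w) (hwne : w ≠ [])
    (hP : ∀ j rest, Γ.RBisim R j [] → Rstar R rest → P ((j ++ rest) ++ w)) :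
    ∀ ρ, Rstar R ρ → Γ.Chain R P (ρ ++ w) w := by
  intro ρ hρ
  induction ρ with
  | nil => simpa [Chain] using (ReflTransGen.refl : Γ.Chain R P w w)
  | cons Z t ih =>
      have hZR : Z ∈ R := hρ Z (by simp)
      have hZg : Γ.TauStar [Z] [] := hR hZR
      have hZε : Γ.RBisim R [Z] [] :=
        rbisim_rstar hR (fun X hX => by simp at hX; subst hX; exact hZR)
      have ht : Rstar R t := fun X hX => hρ X (by simp [hX])
      have inner : ∀ j, Γ.TauStar j [] → Γ.TauStar [Z] j →
          Γ.Chain R P ((j ++ t) ++ w) (t ++ w) := by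
        intro j hj2
        induction hj2 using ReflTransGen.head_induction_on with
        | refl => intro _; simpa [Chain] using (ReflTransGen.refl : Γ.Chain R P (t ++ w) (t ++ w))
        | head hstep htail ihh =>
            intro hj1
            rename_i j j1
            have hst' : Γ.Step Γ.tau ((j ++ t) ++ w) ((j1 ++ t) ++ w) :=
              step_append w (step_append t hstep)
            have hnf1 : nf R ((j ++ t) ++ w) = (j ++ t) ++ w := nf_append_nf _ hw hwne
            have hnf2 : nf R ((j1 ++ t) ++ w) = (j1 ++ t) ++ w := nf_append_nf _ hw hwne
            have hstep2 : Γ.StepR R Γ.tau ((j ++ t) ++ w) ((j1 ++ t) ++ w) :=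
              ⟨_, _, hnf1.symm, hnf2.symm, hst'⟩
            have hj1' : Γ.TauStar [Z] j1 := hj1.tail hstep
            have hPj1 : P ((j1 ++ t) ++ w) :=
              hP j1 t (stuttering hR hZε hj1' htail) ht
            exact ReflTransGen.head ⟨hstep2, hPj1⟩ (ihh hj1')
      have h1 : Γ.Chain R P (([Z] ++ t) ++ w) (t ++ w) := inner [Z] hZg ReflTransGen.refl
      have h2 : Γ.Chain R P (t ++ w) w := ih ht
      simpa using h1.append h2

/-- transfer of matching data across a suffix-absorption link, stripping direction -/
theorem transfer_strip (hR : R ⊆ Γ.GroundC) {p : List C → List C → Prop}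
    (hp : Equivalence p)
    (hRB : ∀ a b, Γ.RBisim R a b → p a b)
    (hΛ : ∀ z x, Γ.RBisim R x [] → p (z ++ x) z)
    {x : List C} (hx : Γ.RBisim R x []) (hxnf : nf R x ≠ [])
    {B α' : List C} {ℓ : A}
    (hesc : ℓ = Γ.tau → ∀ w, p B w → p α' w → False)
    {s wend v : List C}
    (hc : Γ.Chain R (fun y => p B y) s wend) (hf : Γ.StepR R ℓ wend v) (hqv : p α' v) :
    ∀ z, s = z ++ nf R x → p B s →
      Γ.Data R (fun y => p B y) (fun u => p α' u) ℓ (nf R z) := by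
  have hRBnf : Γ.RBisim R (nf R x) [] := RBisim.trans hR (rbisim_nf hR x).symm hx
  induction hc using ReflTransGen.head_induction_on with
  | refl =>
      intro z hz hBs
      rcases z with _ | ⟨Zc, z₁⟩
      · -- boundary: use transferR with γ := x, δ := []
        simp only [List.nil_append] at hz
        have hBnil : p B ([] : List C) :=
          hp.trans hBs (by rw [hz]; exact hRB _ _ hRBnf)
        have hd : Γ.Data R (fun y => p B y) (fun u => p α' u) ℓ (nf R x) :=
          ⟨wend, v, by rw [← hz]; exact ReflTransGen.refl, hf, hqv⟩
        have := transferR (isRBisim_rbisim hR) hp hRB hBnil hx hesc hd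
        simpa using this
      · -- interior: mimic the final step
        obtain ⟨a0, b0, ha0, hb0, hst⟩ := hf
        obtain ⟨ρ, hρ, ha0d⟩ := nf_decomp (R := R) a0
        rw [← ha0, hz] at ha0d
        have ha0' : a0 = Zc :: (z₁ ++ nf R x ++ ρ) := by
          rw [ha0d]; simp [List.append_assoc]
        obtain ⟨g, hrule, hb0'⟩ := step_cons_destruct (ha0' ▸ hst)
        have hv : v = (g ++ z₁) ++ nf R x := by
          rw [hb0, hb0']
          rw [show g ++ (z₁ ++ nf R x ++ ρ) = (g ++ z₁) ++ nf R x ++ ρ by simp [List.append_assoc]]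
          exact nf_shape hxnf _ ρ hρ
        have hstz : Γ.Step ℓ (Zc :: z₁) (g ++ z₁) := ⟨Zc, g, z₁, hrule, rfl, rfl⟩
        refine ⟨nf R (Zc :: z₁), nf R (g ++ z₁), ReflTransGen.refl,
          ⟨_, _, rfl, rfl, hstz⟩, ?_⟩
        have h1 : p ((g ++ z₁) ++ nf R x) (g ++ z₁) := hΛ _ _ hRBnf
        have h2 : p (g ++ z₁) (nf R (g ++ z₁)) := hRB _ _ (rbisim_nf hR _)
        exact hp.trans (hp.trans (hv ▸ hqv) h1) h2
  | head hstep htail ih =>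
      rename_i scur snext
      intro z hz hBs
      obtain ⟨⟨a0, b0, ha0, hb0, hst⟩, hBs1⟩ := hstep
      rcases z with _ | ⟨Zc, z₁⟩
      · -- boundary: bundle the remaining chain and use transferR
        simp only [List.nil_append] at hz
        have hBnil : p B ([] : List C) :=
          hp.trans hBs (by rw [hz]; exact hRB _ _ hRBnf)
        have hd : Γ.Data R (fun y => p B y) (fun u => p α' u) ℓ (nf R x) := by
          refine ⟨wend, v, ?_, hf, hqv⟩
          rw [← hz]
          exact ReflTransGen.head ⟨⟨a0, b0, ha0, hb0, hst⟩, hBs1⟩ htail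
        have := transferR (isRBisim_rbisim hR) hp hRB hBnil hx hesc hd
        simpa using this
      · -- interior: mimic the silent step and recurse
        obtain ⟨ρ, hρ, ha0d⟩ := nf_decomp (R := R) a0
        rw [← ha0, hz] at ha0d
        have ha0' : a0 = Zc :: (z₁ ++ nf R x ++ ρ) := by
          rw [ha0d]; simp [List.append_assoc]
        obtain ⟨g, hrule, hb0'⟩ := step_cons_destruct (ha0' ▸ hst)
        have hs1 : snext = (g ++ z₁) ++ nf R x := by
          rw [hb0, hb0']
          rw [show g ++ (z₁ ++ nf R x ++ ρ) = (g ++ z₁) ++ nf R x ++ ρ by simp [List.append_assoc]]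
          exact nf_shape hxnf _ ρ hρ
        obtain ⟨w4, v4, hc4, hf4, hq4⟩ := ih (g ++ z₁) hs1 hBs1
        have hstz : Γ.Step Γ.tau (Zc :: z₁) (g ++ z₁) := ⟨Zc, g, z₁, hrule, rfl, rfl⟩
        have hBnfz : p B (nf R (g ++ z₁)) := by
          refine hp.trans hBs1 ?_
          rw [hs1]
          exact hp.trans (hΛ _ _ hRBnf) (hRB _ _ (rbisim_nf hR _))
        exact ⟨w4, v4, ReflTransGen.head ⟨⟨_, _, rfl, rfl, hstz⟩, hBnfz⟩ hc4, hf4, hq4⟩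

/-- transfer of matching data across a suffix-absorption link, adding direction -/
theorem transfer_add (hR : R ⊆ Γ.GroundC) {p : List C → List C → Prop}
    (hp : Equivalence p)
    (hRB : ∀ a b, Γ.RBisim R a b → p a b)
    (hΛ : ∀ z x, Γ.RBisim R x [] → p (z ++ x) z)
    {x : List C} (hx : Γ.RBisim R x []) (hxnf : nf R x ≠ [])
    {B α' : List C} {ℓ : A}
    (hesc : ℓ = Γ.tau → ∀ w, p B w → p α' w → False)
    {s wend v : List C}
    (hc : Γ.Chain R (fun y => p B y) s wend) (hf : Γ.StepR R ℓ wend v) (hqv : p α' v) :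
    ∀ z, s = nf R z → p B s →
      Γ.Data R (fun y => p B y) (fun u => p α' u) ℓ (z ++ nf R x) := by
  have hRBnf : Γ.RBisim R (nf R x) [] := RBisim.trans hR (rbisim_nf hR x).symm hx
  have hPfact : p B ([] : List C) → ∀ j rest, Γ.RBisim R j [] → Rstar R rest →
      p B ((j ++ rest) ++ nf R x) := by
    intro hBnil j rest hj hrest
    have h1 : p ((j ++ rest) ++ nf R x) (j ++ rest) := hΛ _ _ hRBnf
    have h2 : p (j ++ rest) j := hΛ _ _ (rbisim_rstar hR hrest)
    have h3 : p j [] := hRB _ _ hj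
    exact hp.trans hBnil (hp.symm (hp.trans (hp.trans h1 h2) h3))
  induction hc using ReflTransGen.head_induction_on with
  | refl =>
      intro z hz hBs
      rcases hsend : wend with _ | ⟨X, s₁⟩
      · -- dip: consume the R* prefix, then transfer via ([] , x)
        subst hsend
        have hzR : Rstar R z := nf_eq_nil_iff.1 hz.symm
        have hBnil : p B ([] : List C) := hBs
        have hBx : p B x := hp.trans hBnil (hRB _ _ hx.symm)
        have hd : Γ.Data R (fun y => p B y) (fun u => p α' u) ℓ (nf R ([] : List C)) :=
          ⟨[], v, by rw [nf_nil]; exact ReflTransGen.refl, hf, hqv⟩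
        have hout := transferR (isRBisim_rbisim hR) hp hRB hBx hx.symm hesc hd
        obtain ⟨w4, v4, hc4, hf4, hq4⟩ := hout
        have hcons : Γ.Chain R (fun y => p B y) (z ++ nf R x) (nf R x) :=
          consumeRStar hR (nf_idem x) hxnf (hPfact hBnil) z hzR
        exact ⟨w4, v4, hcons.append hc4, hf4, hq4⟩
      · -- interior final step: mimic
        subst hsend
        obtain ⟨a0, b0, ha0, hb0, hst⟩ := hf
        obtain ⟨ρ, hρ, ha0d⟩ := nf_decomp (R := R) a0
        rw [← ha0] at ha0d
        obtain ⟨ρz, hρz, hzd⟩ := nf_decomp (R := R) z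
        rw [← hz] at hzd
        have ha0' : a0 = X :: (s₁ ++ ρ) := by rw [ha0d]; simp
        obtain ⟨g, hrule, hb0'⟩ := step_cons_destruct (ha0' ▸ hst)
        have hv : v = nf R (g ++ s₁) := by
          rw [hb0, hb0', show g ++ (s₁ ++ ρ) = (g ++ s₁) ++ ρ by simp,
            nf_append_rstar _ hρ]
        have htgt : z ++ nf R x = X :: ((s₁ ++ ρz) ++ nf R x) := by
          rw [hzd]; simp [List.append_assoc]
        have hstz : Γ.Step ℓ (z ++ nf R x) ((g ++ (s₁ ++ ρz)) ++ nf R x) := by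
          rw [htgt]
          exact ⟨X, g, (s₁ ++ ρz) ++ nf R x, hrule, rfl, by simp [List.append_assoc]⟩
        have hnf1 : nf R (z ++ nf R x) = z ++ nf R x := nf_append_nf _ (nf_idem x) hxnf
        have hnf2 : nf R ((g ++ (s₁ ++ ρz)) ++ nf R x) = (g ++ (s₁ ++ ρz)) ++ nf R x :=
          nf_append_nf _ (nf_idem x) hxnf
        refine ⟨z ++ nf R x, (g ++ (s₁ ++ ρz)) ++ nf R x, ReflTransGen.refl,
          ⟨_, _, hnf1.symm, hnf2.symm, hstz⟩, ?_⟩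
        have h1 : p ((g ++ (s₁ ++ ρz)) ++ nf R x) (g ++ (s₁ ++ ρz)) := hΛ _ _ hRBnf
        have h2 : Γ.RBisim R (g ++ (s₁ ++ ρz)) (nf R (g ++ s₁)) := by
          apply rbisim_of_nf_eq hR
          rw [show g ++ (s₁ ++ ρz) = (g ++ s₁) ++ ρz by simp, nf_append_rstar _ hρz, nf_idem]
        exact hp.symm (hp.trans (hp.trans h1 (hRB _ _ h2)) (hp.symm (hv ▸ hqv)))
  | head hstep htail ih =>
      rename_i scur snext
      intro z hz hBs
      obtain ⟨⟨a0, b0, ha0, hb0, hst⟩, hBs1⟩ := hstep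
      rcases hscur : scur with _ | ⟨X, s₁⟩
      · -- dip
        subst hscur
        have hzR : Rstar R z := nf_eq_nil_iff.1 hz.symm
        have hBnil : p B ([] : List C) := hBs
        have hBx : p B x := hp.trans hBnil (hRB _ _ hx.symm)
        have hd : Γ.Data R (fun y => p B y) (fun u => p α' u) ℓ (nf R ([] : List C)) := by
          refine ⟨wend, v, ?_, hf, hqv⟩
          rw [nf_nil]
          exact ReflTransGen.head ⟨⟨a0, b0, ha0, hb0, hst⟩, hBs1⟩ htail
        have hout := transferR (isRBisim_rbisim hR) hp hRB hBx hx.symm hesc hd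
        obtain ⟨w4, v4, hc4, hf4, hq4⟩ := hout
        have hcons : Γ.Chain R (fun y => p B y) (z ++ nf R x) (nf R x) :=
          consumeRStar hR (nf_idem x) hxnf (hPfact hBnil) z hzR
        exact ⟨w4, v4, hcons.append hc4, hf4, hq4⟩
      · -- interior silent step: mimic and recurse
        subst hscur
        obtain ⟨ρ, hρ, ha0d⟩ := nf_decomp (R := R) a0
        rw [← ha0] at ha0d
        obtain ⟨ρz, hρz, hzd⟩ := nf_decomp (R := R) z
        rw [← hz] at hzd
        have ha0' : a0 = X :: (s₁ ++ ρ) := by rw [ha0d]; simp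
        obtain ⟨g, hrule, hb0'⟩ := step_cons_destruct (ha0' ▸ hst)
        have hs1 : snext = nf R (g ++ s₁) := by
          rw [hb0, hb0', show g ++ (s₁ ++ ρ) = (g ++ s₁) ++ ρ by simp,
            nf_append_rstar _ hρ]
        have hz' : snext = nf R (g ++ (s₁ ++ ρz)) := by
          rw [hs1, show g ++ (s₁ ++ ρz) = (g ++ s₁) ++ ρz by simp, nf_append_rstar _ hρz]
        obtain ⟨w4, v4, hc4, hf4, hq4⟩ := ih (g ++ (s₁ ++ ρz)) hz' hBs1
        have htgt : z ++ nf R x = X :: ((s₁ ++ ρz) ++ nf R x) := by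
          rw [hzd]; simp [List.append_assoc]
        have hstz : Γ.Step Γ.tau (z ++ nf R x) ((g ++ (s₁ ++ ρz)) ++ nf R x) := by
          rw [htgt]
          exact ⟨X, g, (s₁ ++ ρz) ++ nf R x, hrule, rfl, by simp [List.append_assoc]⟩
        have hnf1 : nf R (z ++ nf R x) = z ++ nf R x := nf_append_nf _ (nf_idem x) hxnf
        have hnf2 : nf R ((g ++ (s₁ ++ ρz)) ++ nf R x) = (g ++ (s₁ ++ ρz)) ++ nf R x :=
          nf_append_nf _ (nf_idem x) hxnf
        have hBtgt : p B ((g ++ (s₁ ++ ρz)) ++ nf R x) := by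
          refine hp.trans hBs1 (hp.symm ?_)
          have h1 : p ((g ++ (s₁ ++ ρz)) ++ nf R x) (g ++ (s₁ ++ ρz)) := hΛ _ _ hRBnf
          have h2 : Γ.RBisim R (g ++ (s₁ ++ ρz)) snext := by
            apply rbisim_of_nf_eq hR
            rw [hz', nf_idem]
          exact hp.trans h1 (hRB _ _ h2)
        exact ⟨w4, v4, ReflTransGen.head ⟨⟨_, _, hnf1.symm, hnf2.symm, hstz⟩, hBtgt⟩ hc4, hf4, hq4⟩
end Suffix
section Grand
variable {Γ : BPA C A} {R : Set C}

/-- links: `R`-bisimilarity together with absorption of suffixes `≃_R ε` -/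
def LinkE (Γ : BPA C A) (R : Set C) (a b : List C) : Prop :=
  Γ.RBisim R a b ∨ ∃ z x, Γ.RBisim R x [] ∧ (a = z ++ x ∧ b = z ∨ a = z ∧ b = z ++ x)

theorem isRBisim_grand (hR : R ⊆ Γ.GroundC) :
    Γ.IsRBisim R (ReflTransGen (LinkE Γ R)) := by
  classical
  set p := ReflTransGen (LinkE Γ R) with hpdef
  have hlsymm : ∀ {a b : List C}, LinkE Γ R a b → LinkE Γ R b a := by
    rintro a b (h | ⟨z, x, hx, ⟨ha, hb⟩ | ⟨ha, hb⟩⟩)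
    · exact Or.inl h.symm
    · exact Or.inr ⟨z, x, hx, Or.inr ⟨hb, ha⟩⟩
    · exact Or.inr ⟨z, x, hx, Or.inl ⟨hb, ha⟩⟩
  have hsymm : ∀ {a b : List C}, p a b → p b a := by
    intro a b h
    induction h with
    | refl => exact ReflTransGen.refl
    | tail _ h2 ih => exact (ReflTransGen.single (hlsymm h2)).trans ih
  have hpEquiv : Equivalence p :=
    ⟨fun _ => ReflTransGen.refl, hsymm, fun h1 h2 => h1.trans h2⟩
  have hRBp : ∀ a b : List C, Γ.RBisim R a b → p a b :=
    fun _ _ h => ReflTransGen.single (Or.inl h)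
  have hΛp : ∀ z x : List C, Γ.RBisim R x [] → p (z ++ x) z :=
    fun z x hx => ReflTransGen.single (Or.inr ⟨z, x, hx, Or.inl ⟨rfl, rfl⟩⟩)
  have trans1 : ∀ {B ℓ α'}, (ℓ = Γ.tau → ∀ w, p B w → p α' w → False) →
      ∀ {a b}, LinkE Γ R a b → p B b →
      Γ.Data R (fun y => p B y) (fun u => p α' u) ℓ (nf R a) →
      Γ.Data R (fun y => p B y) (fun u => p α' u) ℓ (nf R b) := by
    intro B ℓ α' hesc a b hl hBb hd
    rcases hl with h | ⟨z, x, hx, ⟨ha, hb⟩ | ⟨ha, hb⟩⟩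
    · exact transferR (isRBisim_rbisim hR) hpEquiv hRBp hBb h hesc hd
    · -- strip: a = z ++ x, b = z
      rw [hb] at hBb ⊢
      rw [ha] at hd
      by_cases hxnf : nf R x = []
      · rwa [nf_append_rstar _ (nf_eq_nil_iff.1 hxnf)] at hd
      · obtain ⟨wend, v, hc, hf, hq⟩ := hd
        have hstart : nf R (z ++ x) = z ++ nf R x := nf_append_of_ne_nil z hxnf
        rw [hstart] at hc
        have hBs : p B (z ++ nf R x) := by
          refine hpEquiv.trans hBb (hpEquiv.trans (hpEquiv.symm (hΛp z x hx)) ?_)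
          exact hRBp _ _ (rbisim_of_nf_eq hR (by rw [nf_append_of_ne_nil z hxnf, nf_append_nf z (nf_idem x) hxnf]))
        exact transfer_strip hR hpEquiv hRBp hΛp hx hxnf hesc hc hf hq z rfl hBs
    · -- add: a = z, b = z ++ x
      rw [hb] at hBb ⊢
      rw [ha] at hd
      by_cases hxnf : nf R x = []
      · rw [nf_append_rstar _ (nf_eq_nil_iff.1 hxnf)]; exact hd
      · obtain ⟨wend, v, hc, hf, hq⟩ := hd
        have hBs : p B (nf R z) := by
          refine hpEquiv.trans hBb (hpEquiv.trans (hΛp z x hx) ?_)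
          exact hRBp _ _ (rbisim_nf hR z)
        have hout := transfer_add hR hpEquiv hRBp hΛp hx hxnf hesc hc hf hq z rfl hBs
        rwa [← nf_append_of_ne_nil z hxnf] at hout
  refine ⟨hpEquiv, fun a b h => hRBp _ _ (rbisim_of_REq hR h), ?_⟩
  intro α B hαB
  have hground : Γ.TauStar α [] → Γ.TauStar B [] := by
    induction hαB with
    | refl => exact id
    | tail h1 h2 ih =>
        intro hg
        have hg2 := ih hg
        rcases h2 with h | ⟨z, x, hx, ⟨ha, hb⟩ | ⟨ha, hb⟩⟩
        · exact h.ground hg2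
        · rw [hb]; rw [ha] at hg2; exact ground_of_append_left hg2
        · rw [hb]; rw [ha] at hg2; exact ground_append hg2 (hx.symm.ground ReflTransGen.refl)
  have walk : ∀ {ℓ α'}, (ℓ = Γ.tau → ∀ w, p B w → p α' w → False) →
      ∀ a, ReflTransGen (LinkE Γ R) a B →
      Γ.Data R (fun y => p B y) (fun u => p α' u) ℓ (nf R a) →
      Γ.Data R (fun y => p B y) (fun u => p α' u) ℓ (nf R B) := by
    intro ℓ α' hesc a hab
    induction hab using ReflTransGen.head_induction_on with
    | refl => exact id
    | head hlink htail ih =>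
        intro hd
        exact ih (trans1 hesc hlink (hsymm htail) hd)
  refine ⟨hground, ?_, ?_⟩
  · intro α' hst hne
    have hesc : Γ.tau = Γ.tau → ∀ w, p B w → p α' w → False := by
      intro _ w h1 h2
      exact hne ((hαB.trans h1).trans (hsymm h2))
    have base : Γ.Data R (fun y => p B y) (fun u => p α' u) Γ.tau (nf R α) :=
      ⟨nf R α, nf R α', ReflTransGen.refl, stepR_of_step hst,
        hRBp _ _ (rbisim_nf hR α')⟩
    obtain ⟨w2, v, hch, hstep, hQ⟩ := walk hesc α hαB base
    have hBw2 : p B w2 := hch.last (hRBp _ _ (rbisim_nf hR B))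
    refine ⟨w2, v, hch, hstep, ?_, hQ⟩
    intro hwv
    exact hesc rfl w2 hBw2 (hpEquiv.trans hQ (hsymm hwv))
  · intro ℓ hℓ α' hst
    have hesc : ℓ = Γ.tau → ∀ w, p B w → p α' w → False := fun hτ => absurd hτ hℓ
    have base : Γ.Data R (fun y => p B y) (fun u => p α' u) ℓ (nf R α) :=
      ⟨nf R α, nf R α', ReflTransGen.refl, stepR_of_step hst,
        hRBp _ _ (rbisim_nf hR α')⟩
    obtain ⟨w2, v, hch, hstep, hQ⟩ := walk hesc α hαB base
    exact ⟨w2, v, hch, hstep, hQ⟩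

/-- suffixes `≃_R ε` are absorbed -/
theorem rbisim_absorb (hR : R ⊆ Γ.GroundC) {z x : List C} (hx : Γ.RBisim R x []) :
    Γ.RBisim R (z ++ x) z :=
  ⟨_, isRBisim_grand hR, ReflTransGen.single (Or.inr ⟨z, x, hx, Or.inl ⟨rfl, rfl⟩⟩)⟩

end Grand

section Main
variable {Γ : BPA C A} {R : Set C}

theorem rbisim_eps_of_mem_IdR (hR : R ⊆ Γ.GroundC) :
    ∀ α : List C, (∀ X ∈ α, X ∈ Γ.IdR R) → Γ.RBisim R α [] := by
  intro α
  induction α with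
  | nil => intro _; exact rbisim_refl hR []
  | cons X t ih =>
      intro h
      have hX : Γ.RBisim R [X] [] := h X (by simp)
      have ht : Γ.RBisim R t [] := ih fun Y hY => h Y (by simp [hY])
      have h1 : Γ.RBisim R ([X] ++ t) [X] := rbisim_absorb hR ht
      exact RBisim.trans hR h1 hX

theorem mem_IdR_of_rbisim_eps (hR : R ⊆ Γ.GroundC) :
    ∀ α : List C, Γ.RBisim R α [] → ∀ X ∈ α, X ∈ Γ.IdR R := by
  intro α
  induction α with
  | nil => intro _ X hX; simp at hX
  | cons X t ih =>
      intro h Y hY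
      have hg : Γ.TauStar (X :: t) [] := h.symm.ground ReflTransGen.refl
      have hgX : Γ.TauStar [X] [] := ground_of_append_left (a := [X]) (b := t) hg
      have hgt : Γ.TauStar t [] := ground_of_append_right (a := [X]) (b := t) hg
      have hpath : Γ.TauStar (X :: t) t := by simpa using tauStar_append t hgX
      have ht : Γ.RBisim R t [] := stuttering hR h hpath hgt
      have h2 : Γ.RBisim R ([X] ++ t) [X] := rbisim_absorb hR ht
      have hX : Γ.RBisim R [X] [] := RBisim.trans hR h2.symm h
      rcases List.mem_cons.1 hY with rfl | hY'
      · exact hX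
      · exact ih ht Y hY'

end Main
end BPA

/-- `α ≃_R ε` iff every constant occurring in `α` lies in `Id_R`. -/
theorem RBisim_eps_iff_IdR {C A : Type} (Γ : BPA C A) (hΓ : Γ.Normed)
    (R : Set C) (hR : R ⊆ Γ.GroundC) (α : List C) :
    Γ.RBisim R α [] ↔ ∀ X ∈ α, X ∈ Γ.IdR R :=
  ⟨fun h => BPA.mem_IdR_of_rbisim_eps hR α h, fun h => BPA.rbisim_eps_of_mem_IdR hR α h⟩
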